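/- For every M ∈ ℕ there exist a convex body K ⊆ ℝ³, a finite set V ⊆ ℝ³, and a set X ⊆ ℝ³ with |X| = M such that the family of translates {K + v : v ∈ V} shatters X; that is, for every subset X' ⊆ X there is v ∈ V with X ∩ (K + v) = X'. -/

import Mathlib

open Pointwise

noncomputable section Shatter17Aux

abbrev E17 := EuclideanSpace ℝ (Fin 3)

def mk3 (a b c : ℝ) : E17 := WithLp.toLp 2 ![a, b, c]

@[simp] lemma mk3_zero (a b c : ℝ) : mk3 a b c 0 = a := rfl
@[simp] lemma mk3_one (a b c : ℝ) : mk3 a b c 1 = b := rfl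
@[simp] lemma mk3_two (a b c : ℝ) : mk3 a b c 2 = c := rfl

def ptA (i : ℕ) : E17 := mk3 i (-(i:ℝ)^2) 0

def code17 (S : Finset ℕ) : ℕ := 1 + Encodable.encode S

lemma code17_pos (S : Finset ℕ) : 1 ≤ code17 S := Nat.le_add_right 1 _

lemma code17_inj : Function.Injective code17 := fun S T h =>
  Encodable.encode_injective (Nat.add_left_cancel h)

def ptB (S : Finset ℕ) : E17 := mk3 (code17 S) 0 ((4:ℝ) ^ code17 S)

def gens (M : ℕ) : Finset E17 :=
  letI := Classical.decEq E17
  (Finset.Icc 1 M).powerset.biUnion fun S => S.image fun i => ptA i + ptB S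

lemma mem_gens {M : ℕ} {x : E17} :
    x ∈ gens M ↔ ∃ S ∈ (Finset.Icc 1 M).powerset, ∃ i ∈ S, ptA i + ptB S = x := by
  classical
  simp [gens, Finset.mem_biUnion, Finset.mem_image]

def body (M : ℕ) : Set E17 :=
  convexHull ℝ (gens M : Set E17) + Metric.closedBall 0 (1/(9*(M+1)))

def phi (j k : ℕ) (w : E17) : ℝ :=
  2*(j:ℝ) * w 0 + w 1 + (-(4*(j:ℝ)) / (3 * 4^k)) * w 2

lemma phi_linear (j k : ℕ) : IsLinearMap ℝ (phi j k) := by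
  constructor
  · intro u v; simp only [phi, PiLp.add_apply]; ring
  · intro c u; simp only [phi, PiLp.smul_apply, smul_eq_mul]; ring

lemma sq_ge_one_of_ne {i j : ℕ} (h : i ≠ j) : (1:ℝ) ≤ ((i:ℝ) - j)^2 := by
  have : ((i:ℝ) - j) ≤ -1 ∨ 1 ≤ ((i:ℝ) - j) := by
    rcases lt_or_gt_of_ne h with h' | h'
    · left
      have : (i:ℝ) + 1 ≤ j := by exact_mod_cast Nat.succ_le_of_lt h'
      linarith
    · right
      have : (j:ℝ) + 1 ≤ i := by exact_mod_cast Nat.succ_le_of_lt h'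
      linarith
  rcases this with h' | h' <;> nlinarith

lemma key17 (i j m k : ℕ) (hj : 1 ≤ j) (hne : m ≠ k ∨ i ≠ j) :
    2*(j:ℝ)*((i:ℝ) + m) + (-(i:ℝ)^2) + (-(4*(j:ℝ)) / (3 * 4^k)) * 4^m + 2/3
      ≤ 2*(j:ℝ)*((j:ℝ) + k) + (-(j:ℝ)^2) + (-(4*(j:ℝ)) / (3 * 4^k)) * 4^k := by
  have h4k : (0:ℝ) < 4^k := by positivity
  have hJ : (1:ℝ) ≤ (j:ℝ) := by exact_mod_cast hj
  have hrhs : (-(4*(j:ℝ)) / (3 * 4^k)) * 4^k = -(4*(j:ℝ))/3 := by field_simp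
  rw [hrhs]
  rcases eq_or_ne m k with rfl | hmk
  · have hij : i ≠ j := hne.resolve_left (fun h => h rfl)
    rw [hrhs]
    have := sq_ge_one_of_ne hij
    nlinarith
  · rcases lt_or_gt_of_ne hmk with hlt | hgt
    · have hkm : (m:ℝ) + 1 ≤ k := by exact_mod_cast Nat.succ_le_of_lt hlt
      have hterm : (-(4*(j:ℝ)) / (3 * 4^k)) * 4^m ≤ 0 := by
        apply mul_nonpos_of_nonpos_of_nonneg
        · apply div_nonpos_of_nonpos_of_nonneg <;> nlinarith
        · positivity
      nlinarith [sq_nonneg ((i:ℝ) - j)]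
    · obtain ⟨r, hr1, hrm⟩ : ∃ r, 1 ≤ r ∧ m = k + r :=
        ⟨m - k, by omega, by omega⟩
      subst hrm
      have hbern : 1 + (r:ℝ)*3 ≤ 4^r := by
        have := one_add_mul_le_pow (by norm_num : (-2:ℝ) ≤ 3) r
        norm_num at this
        linarith
      have hpow : (4:ℝ)^(k+r) = 4^k * 4^r := pow_add 4 k r
      have hterm : (-(4*(j:ℝ)) / (3 * 4^k)) * 4^(k+r) = (-(4*(j:ℝ))/3) * 4^r := by
        rw [hpow]; field_simp
      rw [hterm]
      have hrr : (1:ℝ) ≤ (r:ℝ) := by exact_mod_cast hr1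
      have hcast : ((k + r : ℕ):ℝ) = (k:ℝ) + r := by push_cast; ring
      rw [hcast]
      nlinarith [sq_nonneg ((i:ℝ) - j),
        mul_nonneg (le_of_lt (lt_of_lt_of_le one_pos hJ)) (sub_nonneg.mpr hbern)]

lemma coord_abs_le (x : E17) (t : Fin 3) : |x t| ≤ ‖x‖ := by
  rw [EuclideanSpace.norm_eq]
  calc |x t| = Real.sqrt (‖x t‖^2) := by
        rw [Real.norm_eq_abs, Real.sqrt_sq_eq_abs, abs_abs]
    _ ≤ Real.sqrt (∑ s, ‖x s‖^2) :=
        Real.sqrt_le_sqrt (Finset.single_le_sum (f := fun s => ‖x s‖^2)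
          (fun s _ => by positivity) (Finset.mem_univ t))

lemma phi_ball_bound (M j k : ℕ) (hj : j ≤ M) (hk : 1 ≤ k) (e : E17)
    (he : ‖e‖ ≤ 1/(9*(M+1))) : |phi j k e| ≤ 1/3 := by
  have hM : (0:ℝ) < 9*((M:ℝ)+1) := by positivity
  have h0 : |e 0| ≤ 1/(9*((M:ℝ)+1)) := by
    have := (coord_abs_le e 0).trans he; push_cast at this ⊢; linarith
  have h1 : |e 1| ≤ 1/(9*((M:ℝ)+1)) := by
    have := (coord_abs_le e 1).trans he; push_cast at this ⊢; linarith
  have h2 : |e 2| ≤ 1/(9*((M:ℝ)+1)) := by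
    have := (coord_abs_le e 2).trans he; push_cast at this ⊢; linarith
  have hjR : (j:ℝ) ≤ M := by exact_mod_cast hj
  have h4 : (4:ℝ) ≤ 4^k := by
    calc (4:ℝ) = 4^1 := (pow_one 4).symm
    _ ≤ 4^k := pow_le_pow_right₀ (by norm_num) hk
  have hγ : |(-(4*(j:ℝ)) / (3 * 4^k))| ≤ (M:ℝ) := by
    rw [abs_div, abs_neg]
    have hnum : |4*(j:ℝ)| = 4*(j:ℝ) := abs_of_nonneg (by positivity)
    have hden : |3 * (4:ℝ)^k| = 3 * 4^k := abs_of_nonneg (by positivity)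
    rw [hnum, hden, div_le_iff₀ (by nlinarith)]
    nlinarith [Nat.cast_nonneg (α := ℝ) j]
  unfold phi
  calc |2*(j:ℝ) * e 0 + e 1 + (-(4*(j:ℝ)) / (3 * 4^k)) * e 2|
      ≤ |2*(j:ℝ) * e 0 + e 1| + |(-(4*(j:ℝ)) / (3 * 4^k)) * e 2| := abs_add_le _ _
    _ ≤ |2*(j:ℝ) * e 0| + |e 1| + |(-(4*(j:ℝ)) / (3 * 4^k))| * |e 2| := by
        rw [abs_mul]; gcongr; exact abs_add_le _ _
    _ ≤ 2*(M:ℝ) * (1/(9*((M:ℝ)+1))) + 1/(9*((M:ℝ)+1)) + (M:ℝ) * (1/(9*((M:ℝ)+1))) := by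
        rw [abs_mul, abs_of_nonneg (show (0:ℝ) ≤ 2*(j:ℝ) by positivity)]
        have t0 : 2*(j:ℝ) * |e 0| ≤ 2*(M:ℝ) * (1/(9*((M:ℝ)+1))) :=
          mul_le_mul (by linarith) h0 (abs_nonneg _) (by positivity)
        have t2 : |(-(4*(j:ℝ)) / (3 * 4^k))| * |e 2| ≤ (M:ℝ) * (1/(9*((M:ℝ)+1))) :=
          mul_le_mul hγ h2 (abs_nonneg _) (Nat.cast_nonneg M)
        linarith [h1]
    _ ≤ 1/3 := by
        have heq : 2*(M:ℝ)*(1/(9*((M:ℝ)+1))) + 1/(9*((M:ℝ)+1)) + (M:ℝ)*(1/(9*((M:ℝ)+1)))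
            = (3*(M:ℝ)+1)/(9*((M:ℝ)+1)) := by field_simp; ring
        rw [heq, div_le_div_iff₀ hM (by norm_num)]
        nlinarith [Nat.cast_nonneg (α := ℝ) M]

/-- coordinates of a generator -/
lemma phi_gen (j k i : ℕ) (S : Finset ℕ) :
    phi j k (ptA i + ptB S) =
      2*(j:ℝ)*((i:ℝ) + (code17 S : ℝ)) + (-(i:ℝ)^2)
        + (-(4*(j:ℝ)) / (3 * 4^k)) * 4^(code17 S) := by
  simp only [phi, PiLp.add_apply, ptA, ptB, mk3_zero, mk3_one, mk3_two]
  ring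

lemma sep17 {M j : ℕ} {T : Finset ℕ} (hj : j ∈ Finset.Icc 1 M)
    (hT : T ⊆ Finset.Icc 1 M) (hjT : j ∉ T) : ptA j + ptB T ∉ body M := by
  classical
  rw [Finset.mem_Icc] at hj
  set k := code17 T with hk
  set o := ptA j + ptB T with ho
  have hphio : phi j k o = 2*(j:ℝ)*((j:ℝ) + (k:ℝ)) + (-(j:ℝ)^2)
      + (-(4*(j:ℝ)) / (3 * 4^k)) * 4^k := phi_gen j k j T
  intro hmem
  rw [body, Set.mem_add] at hmem
  obtain ⟨u, hu, e, he, hue⟩ := hmem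
  -- bound on the hull part
  have hhull : u ∈ {w : E17 | phi j k w ≤ phi j k o - 2/3} := by
    refine convexHull_min ?_ (convex_halfSpace_le (phi_linear j k) _) hu
    intro p hp
    rw [Finset.mem_coe, mem_gens] at hp
    obtain ⟨S, hS, i, hiS, rfl⟩ := hp
    rw [Finset.mem_powerset] at hS
    have hi : i ∈ Finset.Icc 1 M := hS hiS
    rw [Finset.mem_Icc] at hi
    have hne : code17 S ≠ k ∨ i ≠ j := by
      rcases eq_or_ne S T with rfl | hST
      · exact Or.inr (fun h => hjT (h ▸ hiS))
      · exact Or.inl (fun h => hST (code17_inj h))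
    have := key17 i j (code17 S) k hj.1 hne
    rw [Set.mem_setOf_eq, phi_gen, hphio]
    linarith
  have hball : |phi j k e| ≤ 1/3 := by
    refine phi_ball_bound M j k hj.2 (code17_pos T) e ?_
    rw [Metric.mem_closedBall, dist_zero_right] at he
    exact_mod_cast he
  have hlin := phi_linear j k
  have : phi j k o = phi j k u + phi j k e := by rw [← hue, hlin.map_add]
  rw [Set.mem_setOf_eq] at hhull
  have := abs_le.mp hball
  linarith


lemma body_compact (M : ℕ) : IsCompact (body M) :=
  ((gens M).finite_toSet.isCompact_convexHull ℝ).add (isCompact_closedBall 0 _)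

lemma body_convex (M : ℕ) : Convex ℝ (body M) :=
  (convex_convexHull ℝ _).add (convex_closedBall 0 _)

lemma ptA_inj : Function.Injective ptA := by
  intro i i' h
  have := congrArg (fun w : E17 => w 0) h
  simp only [ptA, mk3_zero] at this
  exact_mod_cast this

lemma gen_mem_body {M i : ℕ} {S : Finset ℕ} (hS : S ∈ (Finset.Icc 1 M).powerset)
    (hi : i ∈ S) : ptA i + ptB S ∈ body M := by
  have h1 : ptA i + ptB S ∈ convexHull ℝ (gens M : Set E17) :=
    subset_convexHull ℝ _ (by rw [Finset.mem_coe, mem_gens]; exact ⟨S, hS, i, hi, rfl⟩)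
  have h2 : (0 : E17) ∈ Metric.closedBall 0 (1/(9*(M+1))) := by
    rw [Metric.mem_closedBall, dist_self]; positivity
  have := Set.add_mem_add h1 h2
  rwa [add_zero] at this

lemma body_interior_nonempty (M : ℕ) (hM : 1 ≤ M) : (interior (body M)).Nonempty := by
  have hS : ({1} : Finset ℕ) ∈ (Finset.Icc 1 M).powerset := by
    rw [Finset.mem_powerset, Finset.singleton_subset_iff, Finset.mem_Icc]
    exact ⟨le_refl 1, hM⟩
  set p := ptA 1 + ptB {1} with hp
  have hball : Metric.ball p (1/(9*(M+1))) ⊆ body M := by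
    intro w hw
    rw [Metric.mem_ball] at hw
    have h1 : ptA 1 + ptB {1} ∈ convexHull ℝ (gens M : Set E17) :=
      subset_convexHull ℝ _ (by rw [Finset.mem_coe, mem_gens]
                                exact ⟨{1}, hS, 1, Finset.mem_singleton_self 1, rfl⟩)
    have h2 : w - p ∈ Metric.closedBall (0 : E17) (1/(9*(M+1))) := by
      rw [Metric.mem_closedBall, dist_zero_right]
      have : ‖w - p‖ = dist w p := (dist_eq_norm w p).symm
      rw [this]; exact le_of_lt hw
    have := Set.add_mem_add h1 h2
    rwa [← hp, add_sub_cancel] at this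
  have : Metric.ball p (1/(9*(M+1))) ⊆ interior (body M) :=
    interior_maximal hball Metric.isOpen_ball
  exact Set.Nonempty.mono this (Metric.nonempty_ball.mpr (by positivity))

/-- For every `M` there are a convex body `K ⊆ ℝ³`, a finite set `V ⊆ ℝ³` and
a set `X` of `M` points such that the translates `{K + v : v ∈ V}` shatter `X`. -/
theorem exists_translates_shattering_M_points (M : ℕ) :
    ∃ K : Set (EuclideanSpace ℝ (Fin 3)),
      IsCompact K ∧ Convex ℝ K ∧ (interior K).Nonempty ∧
      ∃ V : Finset (EuclideanSpace ℝ (Fin 3)),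
        ∃ X : Finset (EuclideanSpace ℝ (Fin 3)), X.card = M ∧
          ∀ X' ⊆ X, ∃ v ∈ V,
            (↑X : Set (EuclideanSpace ℝ (Fin 3))) ∩ (K + {v}) = ↑X' := by
  classical
  rcases Nat.eq_zero_or_pos M with rfl | hM
  · refine ⟨Metric.closedBall 0 1, isCompact_closedBall 0 1, convex_closedBall 0 1, ?_, {0}, ∅, rfl, ?_⟩
    · refine Set.Nonempty.mono (interior_maximal Metric.ball_subset_closedBall Metric.isOpen_ball)
        (Metric.nonempty_ball.mpr one_pos)
    · intro X' hX'
      refine ⟨0, Finset.mem_singleton_self 0, ?_⟩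
      rw [Finset.subset_empty.mp hX']
      simp
  · refine ⟨body M, body_compact M, body_convex M, body_interior_nonempty M hM, 
      (Finset.Icc 1 M).powerset.image (fun S => -ptB S),
      (Finset.Icc 1 M).image ptA, ?_, ?_⟩
    · rw [Finset.card_image_of_injective _ ptA_inj, Nat.card_Icc]; omega
    · intro X' hX'
      set T : Finset ℕ := (Finset.Icc 1 M).filter (fun i => ptA i ∈ X') with hT
      have hTsub : T ⊆ Finset.Icc 1 M := Finset.filter_subset _ _
      have hTpow : T ∈ (Finset.Icc 1 M).powerset := Finset.mem_powerset.mpr hTsub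
      have hImage : T.image ptA = X' := by
        apply Finset.Subset.antisymm
        · intro x hx
          obtain ⟨i, hi, rfl⟩ := Finset.mem_image.mp hx
          exact (Finset.mem_filter.mp hi).2
        · intro x hx
          obtain ⟨i, hi, rfl⟩ := Finset.mem_image.mp (hX' hx)
          exact Finset.mem_image.mpr ⟨i, Finset.mem_filter.mpr ⟨hi, hx⟩, rfl⟩
      refine ⟨-ptB T, Finset.mem_image.mpr ⟨T, hTpow, rfl⟩, ?_⟩
      ext x
      simp only [Set.mem_inter_iff, Finset.coe_image, Set.mem_image, Finset.mem_coe,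
        Set.add_singleton, Set.mem_setOf_eq]
      constructor
      · rintro ⟨hxX, y, hy, rfl⟩
        obtain ⟨jj, hjj, hAjj⟩ := hxX
        -- y + -ptB T = ptA jj, so y = ptA jj + ptB T
        have hy' : y = ptA jj + ptB T := by
          rw [hAjj]; abel
        by_cases hjT : jj ∈ T
        · rw [← hImage]
          exact Finset.mem_coe.mpr (Finset.mem_image.mpr ⟨jj, hjT, hAjj⟩)
        · exact absurd (hy' ▸ hy) (sep17 hjj hTsub hjT)
      · intro hx
        have hxT : x ∈ T.image ptA := hImage ▸ Finset.mem_coe.mp hx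
        obtain ⟨i, hiT, rfl⟩ := Finset.mem_image.mp hxT
        exact ⟨⟨i, hTsub hiT, rfl⟩, ptA i + ptB T, gen_mem_body hTpow hiT, by abel⟩

end Shatter17Aux
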